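/- Let G=(V,E) be a finite simple graph with boundary set ∂V ⊆ V such that every diagonal entry of D is strictly positive. Then the matrix Q^{1/2}·𝓛_R·Q^{-1/2} is symmetric and positive semidefinite, and D^{1/2}·Q^{1/2}·1 is an eigenvector of Q^{1/2}·𝓛_R·Q^{-1/2} with eigenvalue 0. -/

import Mathlib

open Matrix Finset

namespace RN

variable {V : Type*}

/-- The adjacency matrix of `G` with real entries. -/
noncomputable def adjMat [Fintype V] [DecidableEq V] (G : SimpleGraph V) [DecidableRel G.Adj] :
    Matrix V V ℝ :=
  Matrix.of fun u v => if G.Adj u v then 1 else 0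

/-- The reflected adjacency matrix `R = [[A₁₁, A₁₂],[2A₁₂ᵀ, A₂₂]]`, where the first block is
indexed by the interior vertices and the second block by the boundary vertices `B`. -/
noncomputable def reflAdj [Fintype V] [DecidableEq V] (G : SimpleGraph V) [DecidableRel G.Adj]
    (B : Finset V) : Matrix V V ℝ :=
  Matrix.of fun u v => (if u ∈ B ∧ v ∉ B then 2 else 1) * adjMat G u v

/-- The diagonal entries of `D = diag(R·1)`. -/
noncomputable def deg [Fintype V] [DecidableEq V] (G : SimpleGraph V) [DecidableRel G.Adj]
    (B : Finset V) (v : V) : ℝ :=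
  ∑ w, reflAdj G B v w

/-- `D = diag(R·1)`. -/
noncomputable def Dmat [Fintype V] [DecidableEq V] (G : SimpleGraph V) [DecidableRel G.Adj]
    (B : Finset V) : Matrix V V ℝ :=
  Matrix.diagonal (deg G B)

/-- The reflected Neumann Laplacian `L_R = D - R`. -/
noncomputable def LR [Fintype V] [DecidableEq V] (G : SimpleGraph V) [DecidableRel G.Adj]
    (B : Finset V) : Matrix V V ℝ :=
  Dmat G B - reflAdj G B

/-- The weight `q_v`, which is `1` on interior vertices and `1/2` on boundary vertices. -/
noncomputable def qw [DecidableEq V] (B : Finset V) (v : V) : ℝ := if v ∈ B then 1/2 else 1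

/-- The diagonal matrix `Q` with entries `1` on the interior and `1/2` on the boundary. -/
noncomputable def Qmat [Fintype V] [DecidableEq V] (B : Finset V) : Matrix V V ℝ :=
  Matrix.diagonal (qw B)

/-- `D^{1/2}`. -/
noncomputable def Dhalf [Fintype V] [DecidableEq V] (G : SimpleGraph V) [DecidableRel G.Adj]
    (B : Finset V) : Matrix V V ℝ :=
  Matrix.diagonal fun v => Real.sqrt (deg G B v)

/-- `D^{-1/2}`. -/
noncomputable def Dinvhalf [Fintype V] [DecidableEq V] (G : SimpleGraph V) [DecidableRel G.Adj]
    (B : Finset V) : Matrix V V ℝ :=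
  Matrix.diagonal fun v => (Real.sqrt (deg G B v))⁻¹

/-- The normalized reflected Neumann Laplacian `𝓛_R = D^{-1/2} L_R D^{-1/2}`. -/
noncomputable def NLR [Fintype V] [DecidableEq V] (G : SimpleGraph V) [DecidableRel G.Adj]
    (B : Finset V) : Matrix V V ℝ :=
  Dinvhalf G B * LR G B * Dinvhalf G B

/-- `Q^{1/2}`. -/
noncomputable def Qhalf [Fintype V] [DecidableEq V] (B : Finset V) : Matrix V V ℝ :=
  Matrix.diagonal fun v => Real.sqrt (qw B v)

/-- `Q^{-1/2}`. -/
noncomputable def Qinvhalf [Fintype V] [DecidableEq V] (B : Finset V) : Matrix V V ℝ :=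
  Matrix.diagonal fun v => (Real.sqrt (qw B v))⁻¹

end RN

open RN

section Aux

variable {V : Type*} [Fintype V] [DecidableEq V] (G : SimpleGraph V) [DecidableRel G.Adj]
  (B : Finset V)

lemma RN.qw_pos (v : V) : 0 < qw B v := by
  unfold qw; split_ifs <;> norm_num

lemma RN.reflAdj_nonneg (u v : V) : 0 ≤ reflAdj G B u v := by
  unfold reflAdj adjMat
  simp only [Matrix.of_apply]
  split_ifs <;> norm_num

lemma RN.w_symm (u v : V) :
    qw B u * reflAdj G B u v = qw B v * reflAdj G B v u := by
  unfold qw reflAdj adjMat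
  simp only [Matrix.of_apply, G.adj_comm u v]
  by_cases hu : u ∈ B <;> by_cases hv : v ∈ B <;> simp [hu, hv] <;> ring

lemma RN.M_apply (u v : V) :
    (Qhalf B * NLR G B * Qinvhalf B) u v =
      Real.sqrt (qw B u) * ((Real.sqrt (deg G B u))⁻¹ * LR G B u v *
        (Real.sqrt (deg G B v))⁻¹) * (Real.sqrt (qw B v))⁻¹ := by
  simp [Qhalf, Qinvhalf, NLR, Dinvhalf, Matrix.mul_diagonal, Matrix.diagonal_mul]

lemma RN.sum_LR (u : V) : ∑ v, LR G B u v = 0 := by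
  simp only [LR, Dmat, Matrix.sub_apply, Finset.sum_sub_distrib, Matrix.diagonal_apply]
  rw [Finset.sum_ite_eq Finset.univ u (fun _ => deg G B u)]
  simp [deg]

lemma RN.quad_eq (x : V → ℝ) :
    x ⬝ᵥ ((Qmat B * LR G B) *ᵥ x) =
      ∑ u, ∑ v, (qw B u * reflAdj G B u v) * (x u ^ 2 - x u * x v) := by
  have hN : ∀ u v, (Qmat B * LR G B) u v =
      (if u = v then qw B u * deg G B u else 0) - qw B u * reflAdj G B u v := by
    intro u v
    simp only [Qmat, Matrix.diagonal_mul, LR, Matrix.sub_apply, Dmat, Matrix.diagonal_apply]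
    split_ifs <;> ring
  simp only [dotProduct, Matrix.mulVec, hN]
  refine Finset.sum_congr rfl fun u _ => ?_
  rw [Finset.mul_sum]
  have step1 : ∑ v, x u * (((if u = v then qw B u * deg G B u else 0)
        - qw B u * reflAdj G B u v) * x v)
      = (∑ v, if u = v then qw B u * deg G B u * (x u * x v) else 0)
        - ∑ v, (qw B u * reflAdj G B u v) * (x u * x v) := by
    rw [← Finset.sum_sub_distrib]
    refine Finset.sum_congr rfl fun v _ => ?_
    split_ifs <;> ring
  rw [step1, Finset.sum_ite_eq Finset.univ u, if_pos (Finset.mem_univ u)]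
  have hd : qw B u * deg G B u * (x u * x u)
      = ∑ v, (qw B u * reflAdj G B u v) * (x u * x u) := by
    rw [show deg G B u = ∑ w, reflAdj G B u w from rfl, Finset.mul_sum, Finset.sum_mul]
  rw [hd, ← Finset.sum_sub_distrib]
  exact Finset.sum_congr rfl fun v _ => by ring

lemma RN.quad_nonneg (x : V → ℝ) :
    0 ≤ ∑ u, ∑ v, (qw B u * reflAdj G B u v) * (x u ^ 2 - x u * x v) := by
  set S := ∑ u, ∑ v, (qw B u * reflAdj G B u v) * (x u ^ 2 - x u * x v) with hS
  have hsym : S = ∑ u, ∑ v, (qw B u * reflAdj G B u v) * (x v ^ 2 - x u * x v) := by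
    rw [hS, Finset.sum_comm]
    refine Finset.sum_congr rfl fun u _ => Finset.sum_congr rfl fun v _ => ?_
    rw [w_symm G B v u]; ring
  have key : 2 * S = ∑ u, ∑ v, (qw B u * reflAdj G B u v) * (x u - x v) ^ 2 := by
    rw [two_mul]
    nth_rewrite 2 [hsym]
    rw [← Finset.sum_add_distrib]
    refine Finset.sum_congr rfl fun u _ => ?_
    rw [← Finset.sum_add_distrib]
    refine Finset.sum_congr rfl fun v _ => ?_
    ring
  have h2 : 0 ≤ 2 * S := by
    rw [key]
    refine Finset.sum_nonneg fun u _ => Finset.sum_nonneg fun v _ => ?_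
    exact mul_nonneg (mul_nonneg (qw_pos B u).le (reflAdj_nonneg G B u v)) (sq_nonneg _)
  linarith

lemma RN.N_posSemidef : (Qmat B * LR G B).PosSemidef := by
  rw [Matrix.posSemidef_iff_dotProduct_mulVec]
  constructor
  · rw [Matrix.IsHermitian, Matrix.conjTranspose_eq_transpose_of_trivial]
    ext u v
    simp only [Matrix.transpose_apply, Qmat, Matrix.diagonal_mul, LR, Dmat,
      Matrix.sub_apply, Matrix.diagonal_apply]
    rcases eq_or_ne u v with rfl | huv
    · rfl
    · simp only [if_neg (Ne.symm huv), if_neg huv, mul_sub, mul_zero]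
      rw [w_symm G B v u]
  · intro x
    have hx : star x = x := by funext v; simp
    rw [hx, quad_eq G B x]
    exact quad_nonneg G B x

end Aux

/-- If every diagonal entry of `D` is strictly positive, the matrix `Q^{1/2}·𝓛_R·Q^{-1/2}` is
symmetric and positive semidefinite, and `D^{1/2}·Q^{1/2}·1` is an eigenvector of
`Q^{1/2}·𝓛_R·Q^{-1/2}` with eigenvalue `0`. -/
theorem conjugated_NLR_isSymm_posSemidef_and_eigenvector {V : Type*} [Fintype V] [DecidableEq V]
    [Nonempty V] (G : SimpleGraph V) [DecidableRel G.Adj] (B : Finset V)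
    (hD : ∀ v, 0 < deg G B v) :
    (Qhalf B * NLR G B * Qinvhalf B).IsSymm ∧
    (Qhalf B * NLR G B * Qinvhalf B).PosSemidef ∧
    Module.End.HasEigenvector (Matrix.toLin' (Qhalf B * NLR G B * Qinvhalf B)) 0
      ((Dhalf G B * Qhalf B) *ᵥ fun _ => (1 : ℝ)) := by
  have hds : ∀ v, Real.sqrt (deg G B v) ≠ 0 := fun v => (Real.sqrt_pos.2 (hD v)).ne'
  have hqs : ∀ v, Real.sqrt (qw B v) ≠ 0 := fun v => (Real.sqrt_pos.2 (RN.qw_pos B v)).ne'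
  set P : Matrix V V ℝ :=
    Matrix.diagonal (fun v => (Real.sqrt (deg G B v))⁻¹ * (Real.sqrt (qw B v))⁻¹) with hP
  have hPH : Pᴴ = P := by
    rw [hP, Matrix.diagonal_conjTranspose]
    exact congrArg Matrix.diagonal (funext fun v => star_trivial _)
  have hMP : Qhalf B * NLR G B * Qinvhalf B = P * (Qmat B * LR G B) * Pᴴ := by
    rw [hPH]
    ext u v
    rw [RN.M_apply]
    simp only [hP, Qmat, Matrix.diagonal_mul, Matrix.mul_diagonal]
    have ha := hds u
    have hc := hds v
    have hb := hqs u
    have he := hqs v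
    set a := Real.sqrt (deg G B u)
    set c := Real.sqrt (deg G B v)
    set b := Real.sqrt (qw B u) with hbdef
    set e := Real.sqrt (qw B v)
    rw [show qw B u = b * b from (Real.mul_self_sqrt (RN.qw_pos B u).le).symm]
    field_simp
  have hpsd : (Qhalf B * NLR G B * Qinvhalf B).PosSemidef := by
    rw [hMP]
    exact (RN.N_posSemidef G B).mul_mul_conjTranspose_same P
  have hy : ∀ v, ((Dhalf G B * Qhalf B) *ᵥ fun _ => (1 : ℝ)) v =
      Real.sqrt (deg G B v) * Real.sqrt (qw B v) := by
    intro v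
    simp [Dhalf, Qhalf, Matrix.diagonal_mul_diagonal, Matrix.mulVec_diagonal]
  have hvec : (Qhalf B * NLR G B * Qinvhalf B) *ᵥ
      ((Dhalf G B * Qhalf B) *ᵥ fun _ => (1 : ℝ)) = 0 := by
    rw [show ((Dhalf G B * Qhalf B) *ᵥ fun _ => (1 : ℝ)) =
      fun v => Real.sqrt (deg G B v) * Real.sqrt (qw B v) from funext hy]
    funext u
    simp only [Matrix.mulVec, dotProduct, RN.M_apply, Pi.zero_apply]
    have hterm : ∀ v, Real.sqrt (qw B u) * ((Real.sqrt (deg G B u))⁻¹ * LR G B u v *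
        (Real.sqrt (deg G B v))⁻¹) * (Real.sqrt (qw B v))⁻¹ *
        (Real.sqrt (deg G B v) * Real.sqrt (qw B v)) =
        (Real.sqrt (qw B u) * (Real.sqrt (deg G B u))⁻¹) * LR G B u v := by
      intro v
      have h1 := hds u
      have h2 := hds v
      have h3 := hqs u
      have h4 := hqs v
      field_simp
    rw [Finset.sum_congr rfl fun v _ => hterm v, ← Finset.mul_sum, RN.sum_LR G B u, mul_zero]
  refine ⟨?_, hpsd, ?_⟩
  · rw [Matrix.IsSymm, ← Matrix.conjTranspose_eq_transpose_of_trivial]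
    exact hpsd.1
  · refine ⟨Module.End.mem_eigenspace_iff.2 ?_, ?_⟩
    · rw [Matrix.toLin'_apply, hvec, zero_smul]
    · intro h
      obtain ⟨v0⟩ := (inferInstance : Nonempty V)
      have h0 := congrFun h v0
      rw [hy v0] at h0
      exact mul_ne_zero (hds v0) (hqs v0) h0
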